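/- Let G be a simple graph on k vertices, k ≥ 3, with a list assignment L such that |L(v)| ≥ k - 2 for every vertex v. If at most k - 2 vertices of G have degree at least k - 2, then G admits a proper L-coloring. -/

import Mathlib

/-- If a simple graph on `k ≥ 3` vertices has lists of size at least `k - 2` on each
vertex and at most `k - 2` vertices of degree at least `k - 2`, then it has a proper
list coloring. -/
theorem list_colorable_of_few_high_degree {V : Type} [Fintype V] [DecidableEq V]
    (k : ℕ) (hk : 3 ≤ k) (G : SimpleGraph V) [DecidableRel G.Adj]
    (hcard : Fintype.card V = k)
    (L : V → Finset ℕ) (hL : ∀ v, k - 2 ≤ (L v).card)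
    (hdeg : (Finset.univ.filter fun v => k - 2 ≤ G.degree v).card ≤ k - 2) :
    ∃ c : V → ℕ, (∀ v, c v ∈ L v) ∧ ∀ u v, G.Adj u v → c u ≠ c v := by
  classical
  -- there are at least two vertices of degree < k - 2
  have hsplit := Finset.card_filter_add_card_filter_not
    (s := (Finset.univ : Finset V)) (p := fun v => k - 2 ≤ G.degree v)
  simp only [Finset.card_univ, hcard] at hsplit
  have h2 : 2 ≤ ((Finset.univ : Finset V).filter fun v => ¬ (k - 2 ≤ G.degree v)).card := by
    omega
  obtain ⟨a, ha, b, hb, hab⟩ := Finset.one_lt_card.mp (by omega :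
    1 < ((Finset.univ : Finset V).filter fun v => ¬ (k - 2 ≤ G.degree v)).card)
  have hda : G.degree a < k - 2 := by
    have := (Finset.mem_filter.mp ha).2; omega
  have hdb : G.degree b < k - 2 := by
    have := (Finset.mem_filter.mp hb).2; omega
  -- Good coloring on a finset
  let Good : Finset V → (V → ℕ) → Prop := fun s c =>
    (∀ w ∈ s, c w ∈ L w) ∧ ∀ u ∈ s, ∀ w ∈ s, G.Adj u w → c u ≠ c w
  -- extension lemma
  have hext : ∀ (s : Finset V) (v : V) (c : V → ℕ), v ∉ s →
      (s.filter (G.Adj v)).card < (L v).card → Good s c →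
      ∃ c', Good (insert v s) c' := by
    intro s v c hv hcnt ⟨hmem, hprop⟩
    have hused : ((s.filter (G.Adj v)).image c).card < (L v).card :=
      lt_of_le_of_lt (Finset.card_image_le) hcnt
    obtain ⟨x, hxL, hxnot⟩ := Finset.not_subset.mp
      (fun hss => absurd (Finset.card_le_card hss) (not_le.mpr hused))
    refine ⟨Function.update c v x, ?_, ?_⟩
    · intro w hw
      rcases Finset.mem_insert.mp hw with rfl | hw
      · simpa using hxL
      · have hwv : w ≠ v := fun h => hv (h ▸ hw)
        simpa [Function.update, hwv] using hmem w hw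
    · intro u hu w hw huw
      rcases Finset.mem_insert.mp hu with hu' | hu' <;>
        rcases Finset.mem_insert.mp hw with hw' | hw'
      · subst hu'; subst hw'; exact absurd huw (G.loopless.irrefl _)
      · have hwv : w ≠ v := fun h => hv (h ▸ hw')
        have hmem' : c w ∈ (s.filter (G.Adj v)).image c :=
          Finset.mem_image_of_mem c
            (Finset.mem_filter.mpr ⟨hw', by rw [← hu']; exact huw⟩)
        rw [hu']
        simp only [Function.update_self, Function.update_of_ne hwv]
        exact fun h => hxnot (h ▸ hmem')
      · have huv : u ≠ v := fun h => hv (h ▸ hu')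
        have hmem' : c u ∈ (s.filter (G.Adj v)).image c :=
          Finset.mem_image_of_mem c
            (Finset.mem_filter.mpr ⟨hu', by rw [← hw']; exact huw.symm⟩)
        rw [hw']
        simp only [Function.update_self, Function.update_of_ne huv]
        intro h
        exact hxnot (h ▸ hmem')
      · have huv : u ≠ v := fun h => hv (h ▸ hu')
        have hwv : w ≠ v := fun h => hv (h ▸ hw')
        simp only [Function.update_of_ne huv, Function.update_of_ne hwv]
        exact hprop u hu' w hw' huw
  -- main induction: any subset of univ \ {a,b} is colorable
  have hmain : ∀ n (s : Finset V), s.card = n → s ⊆ Finset.univ \ {a, b} →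
      ∃ c, Good s c := by
    intro n
    induction n with
    | zero =>
      intro s hs _
      refine ⟨fun _ => 0, ?_, ?_⟩ <;> intro w hw <;>
        simp_all [Finset.card_eq_zero.mp hs]
    | succ n ih =>
      intro s hs hsub
      obtain ⟨v, hv⟩ := Finset.card_pos.mp (by omega : 0 < s.card)
      obtain ⟨c, hc⟩ := ih (s.erase v) (by rw [Finset.card_erase_of_mem hv]; omega)
        ((Finset.erase_subset v s).trans hsub)
      have hcardsub : s.card ≤ k - 2 := by
        have := Finset.card_le_card hsub
        have hle : (Finset.univ \ ({a, b} : Finset V)).card = k - 2 := by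
          rw [Finset.card_sdiff_of_subset (by simp), Finset.card_univ, hcard,
            Finset.card_insert_of_notMem (by simpa using hab), Finset.card_singleton]
        omega
      have hcnt : ((s.erase v).filter (G.Adj v)).card < (L v).card := by
        have h1 : ((s.erase v).filter (G.Adj v)).card ≤ (s.erase v).card :=
          Finset.card_filter_le _ _
        have h2 : (s.erase v).card = s.card - 1 := Finset.card_erase_of_mem hv
        have := hL v
        omega
      obtain ⟨c', hc'⟩ := hext (s.erase v) v c (Finset.notMem_erase v s) hcnt hc
      rw [Finset.insert_erase hv] at hc'
      exact ⟨c', hc'⟩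
  obtain ⟨c0, hc0⟩ := hmain _ (Finset.univ \ {a, b}) rfl (le_refl _)
  -- insert a
  have hcnta : ((Finset.univ \ ({a, b} : Finset V)).filter (G.Adj a)).card < (L a).card := by
    have h1 : ((Finset.univ \ ({a, b} : Finset V)).filter (G.Adj a)).card ≤ G.degree a := by
      rw [← G.card_neighborFinset_eq_degree]
      apply Finset.card_le_card
      intro w hw
      simp only [Finset.mem_filter] at hw
      simpa [SimpleGraph.mem_neighborFinset] using hw.2
    have := hL a
    omega
  obtain ⟨c1, hc1⟩ := hext _ a c0 (by simp) hcnta hc0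
  -- insert b
  have hcntb : ((insert a (Finset.univ \ ({a, b} : Finset V))).filter (G.Adj b)).card
      < (L b).card := by
    have h1 : ((insert a (Finset.univ \ ({a, b} : Finset V))).filter (G.Adj b)).card
        ≤ G.degree b := by
      rw [← G.card_neighborFinset_eq_degree]
      apply Finset.card_le_card
      intro w hw
      simp only [Finset.mem_filter] at hw
      simpa [SimpleGraph.mem_neighborFinset] using hw.2
    have := hL b
    omega
  have hbnot : b ∉ insert a (Finset.univ \ ({a, b} : Finset V)) := by
    simp [hab.symm]
  obtain ⟨c2, hc2⟩ := hext _ b c1 hbnot hcntb hc1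
  have hall : insert b (insert a (Finset.univ \ ({a, b} : Finset V))) = Finset.univ := by
    ext w
    by_cases hwa : w = a <;> by_cases hwb : w = b <;> simp [hwa, hwb]
  rw [hall] at hc2
  exact ⟨c2, fun v => hc2.1 v (Finset.mem_univ v),
    fun u v huv => hc2.2 u (Finset.mem_univ u) v (Finset.mem_univ v) huv⟩
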